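/- Let n ≥ 1 and let x = (x_1,…,x_n) ∈ ℝ^n satisfy 1 > x_1 > x_2 > … > x_n > 0 (i.e., x lies in the interior of the fundamental domain F(S̃_n^aff)). Then cos⁻_{ρ₁}(x) ≠ 0, cos⁻_{ρ₂}(x) ≠ 0, and cos⁺_ρ(x) ≠ 0. -/
import Mathlib


open Real Finset
open Polynomial

/-- The antisymmetric multivariate cosine function
`cos⁻_λ(x) = Σ_{σ ∈ S_n} sgn(σ) ∏_{i=1}^n cos(π λ_{σ(i)} x_i)`. -/
noncomputable def cosMinus (n : ℕ) (lam x : Fin n → ℝ) : ℝ :=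
  ∑ σ : Equiv.Perm (Fin n),
    ((Equiv.Perm.sign σ : ℤ) : ℝ) * ∏ i : Fin n, Real.cos (Real.pi * lam (σ i) * x i)

/-- The symmetric multivariate cosine function
`cos⁺_λ(x) = Σ_{σ ∈ S_n} ∏_{i=1}^n cos(π λ_{σ(i)} x_i)`. -/
noncomputable def cosPlus (n : ℕ) (lam x : Fin n → ℝ) : ℝ :=
  ∑ σ : Equiv.Perm (Fin n), ∏ i : Fin n, Real.cos (Real.pi * lam (σ i) * x i)

/-- Chebyshev-like polynomial family with initial values `1, b` and the
Chebyshev recurrence. -/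
noncomputable def cheb (b : ℝ[X]) : ℕ → ℝ[X]
  | 0 => 1
  | 1 => b
  | (k+2) => 2 * X * cheb b (k+1) - cheb b k

lemma cheb_zero (b : ℝ[X]) : cheb b 0 = 1 := rfl
lemma cheb_one (b : ℝ[X]) : cheb b 1 = b := rfl
lemma cheb_add_two (b : ℝ[X]) (k : ℕ) :
    cheb b (k+2) = 2 * X * cheb b (k+1) - cheb b k := rfl

lemma cheb_deg_coeff (b : ℝ[X]) (hb : b.natDegree ≤ 1) (hb1 : b.coeff 1 ≠ 0) :
    ∀ k : ℕ, (cheb b k).natDegree ≤ k ∧ (cheb b k).coeff k ≠ 0 := by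
  intro k
  induction k using Nat.twoStepInduction with
  | zero => simp [cheb_zero]
  | one => exact ⟨by simpa [cheb_one] using hb, by simpa [cheb_one] using hb1⟩
  | more k ih1 ih2 =>
    obtain ⟨hd1, hc1⟩ := ih1
    obtain ⟨hd2, hc2⟩ := ih2
    have h2X : (2 * X * cheb b (k+1)).natDegree ≤ k + 2 := by
      calc (2 * X * cheb b (k+1)).natDegree
          ≤ (2 * X : ℝ[X]).natDegree + (cheb b (k+1)).natDegree :=
            natDegree_mul_le
        _ ≤ 1 + (k+1) := by
            have h2x : (2 * X : ℝ[X]).natDegree ≤ 1 := by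
              rw [show (2 * X : ℝ[X]) = Polynomial.C 2 * X from by rw [map_ofNat],
                natDegree_C_mul (two_ne_zero), natDegree_X]
            exact add_le_add h2x hd2
        _ = k + 2 := by ring
    constructor
    · rw [cheb_add_two]
      exact le_trans (natDegree_sub_le _ _) (max_le h2X (le_trans hd1 (by omega)))
    · rw [cheb_add_two, coeff_sub]
      have hz : (cheb b k).coeff (k+2) = 0 :=
        coeff_eq_zero_of_natDegree_lt (lt_of_le_of_lt hd1 (by omega))
      have h2 : (2 * X * cheb b (k+1)).coeff (k+2) = 2 * (cheb b (k+1)).coeff (k+1) := by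
        rw [show (2 * X * cheb b (k+1)) = Polynomial.C 2 * (X * cheb b (k+1)) by
              rw [← mul_assoc, map_ofNat],
            coeff_C_mul, coeff_X_mul]
      rw [hz, h2, sub_zero]
      exact mul_ne_zero two_ne_zero hc2

lemma cos_helper (a w : ℝ) : Real.cos (a + w) = 2 * Real.cos w * Real.cos a - Real.cos (a - w) := by
  rw [Real.cos_add, Real.cos_sub]; ring

lemma cheb_X_eval (θ : ℝ) : ∀ k : ℕ, (cheb X k).eval (Real.cos θ) = Real.cos (k * θ) := by
  intro k
  induction k using Nat.twoStepInduction with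
  | zero => simp [cheb_zero]
  | one => simp [cheb_one]
  | more k ih1 ih2 =>
    rw [cheb_add_two]
    simp only [eval_sub, eval_mul, eval_ofNat, eval_X, ih1, ih2]
    have : ((k:ℝ)+2) * θ = (k+1) * θ + θ := by ring
    rw [show (((k:ℕ)+2 : ℕ) : ℝ) = (k:ℝ)+2 by push_cast; ring, this, cos_helper]
    congr 2
    · push_cast; ring
    · push_cast; ring

lemma cheb_V_eval (u : ℝ) : ∀ k : ℕ,
    Real.cos u * (cheb (2 * X - 1) k).eval (Real.cos (2*u)) = Real.cos ((2*(k:ℝ)+1) * u) := by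
  intro k
  induction k using Nat.twoStepInduction with
  | zero => norm_num [cheb_zero]
  | one =>
    simp only [cheb_one, eval_sub, eval_mul, eval_ofNat, eval_X, eval_one]
    have h3 : (2*((1:ℕ):ℝ)+1) * u = 2*u + u := by push_cast; ring
    rw [h3, Real.cos_add, Real.cos_two_mul, Real.sin_two_mul]
    linear_combination (2 * Real.cos u) * Real.sin_sq_add_cos_sq u
  | more k ih1 ih2 =>
    rw [cheb_add_two]
    simp only [eval_sub, eval_mul, eval_ofNat, eval_X]
    have key : (2*((k:ℝ)+2)+1) * u = (2*((k:ℝ)+1)+1) * u + 2*u := by ring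
    have key2 : (2*((k:ℝ)+1)+1) * u - 2*u = (2*(k:ℝ)+1) * u := by ring
    rw [show ((((k:ℕ)+2 : ℕ)) : ℝ) = (k:ℝ)+2 by push_cast; ring, key, cos_helper, key2]
    have ih2' : Real.cos u * (cheb (2 * X - 1) (k+1)).eval (Real.cos (2*u)) =
        Real.cos ((2*((k:ℝ)+1)+1) * u) := by
      rw [ih2]; congr 2; push_cast; ring
    linear_combination (2 * Real.cos (2*u)) * ih2' - ih1

lemma aux_det_ne_zero {n : ℕ} (v : Fin n → ℝ) (hv : Function.Injective v)
    (p : Fin n → ℝ[X]) (hdeg : ∀ j : Fin n, (p j).natDegree ≤ (j:ℕ))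
    (hc : ∀ j : Fin n, (p j).coeff (j:ℕ) ≠ 0) :
    (Matrix.of fun i j => (p j).eval (v i)).det ≠ 0 := by
  rw [Matrix.eval_matrixOfPolynomials_eq_vandermonde_mul_matrixOfPolynomials v p hdeg,
    Matrix.det_mul]
  refine mul_ne_zero (Matrix.det_vandermonde_ne_zero_iff.mpr hv) ?_
  rw [Matrix.det_of_upperTriangular (by
    intro i j hij
    exact Polynomial.coeff_eq_zero_of_natDegree_lt (lt_of_le_of_lt (hdeg j) hij))]
  exact Finset.prod_ne_zero_iff.mpr fun j _ => hc j

lemma cosMinus_eq_det (n : ℕ) (lam x : Fin n → ℝ) :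
    cosMinus n lam x = (Matrix.of fun i j => Real.cos (Real.pi * lam j * x i)).det := by
  rw [← Matrix.det_transpose, Matrix.det_apply']
  rfl

theorem nonzero_in_interior (n : ℕ) (hn : 1 ≤ n) (x : Fin n → ℝ)
    (h1 : x ⟨0, hn⟩ < 1)
    (hdec : ∀ i j : Fin n, i < j → x j < x i)
    (hpos : 0 < x ⟨n - 1, Nat.sub_lt hn Nat.one_pos⟩) :
    cosMinus n (fun i => (n : ℝ) - 1 - ((i : ℕ) : ℝ)) x ≠ 0 ∧
    cosMinus n (fun i => (n : ℝ) - ((i : ℕ) : ℝ) - 1 / 2) x ≠ 0 ∧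
    cosPlus n (fun _ => (1 : ℝ) / 2) x ≠ 0 := by
  have pi_pos := Real.pi_pos
  have hxlt : ∀ i : Fin n, x i < 1 := by
    intro i
    rcases Nat.eq_zero_or_pos i.val with h | h
    · have : i = ⟨0, hn⟩ := Fin.ext h
      rwa [this]
    · exact lt_trans (hdec ⟨0, hn⟩ i h) h1
  have hxpos : ∀ i : Fin n, 0 < x i := by
    intro i
    rcases Nat.lt_or_ge i.val (n - 1) with h | h
    · exact lt_trans hpos (hdec i ⟨n - 1, Nat.sub_lt hn Nat.one_pos⟩ h)
    · have hle : i.val ≤ n - 1 := by have := i.isLt; omega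
      have : i = ⟨n - 1, Nat.sub_lt hn Nat.one_pos⟩ := Fin.ext (le_antisymm hle h)
      rwa [this]
  set v : Fin n → ℝ := fun i => Real.cos (Real.pi * x i) with hv
  have hvinj : Function.Injective v := by
    have hmono : StrictMono v := by
      intro i j hij
      have hj : x j < x i := hdec i j hij
      have hmem1 : Real.pi * x j ∈ Set.Icc 0 Real.pi :=
        ⟨le_of_lt (mul_pos pi_pos (hxpos j)), by nlinarith [hxlt j]⟩
      have hmem2 : Real.pi * x i ∈ Set.Icc 0 Real.pi :=
        ⟨le_of_lt (mul_pos pi_pos (hxpos i)), by nlinarith [hxlt i]⟩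
      exact Real.strictAntiOn_cos hmem1 hmem2 (by nlinarith)
    exact hmono.injective
  have hsign_ne : ∀ σ : Equiv.Perm (Fin n), ((Equiv.Perm.sign σ : ℤ) : ℝ) ≠ 0 :=
    fun σ => Int.cast_ne_zero.mpr (Units.ne_zero _)
  refine ⟨?_, ?_, ?_⟩
  · -- case ρ₁
    set Q : Matrix (Fin n) (Fin n) ℝ :=
      Matrix.of fun i j => (cheb X ((j : Fin n) : ℕ)).eval (v i) with hQdef
    have hX1 : (X : ℝ[X]).natDegree ≤ 1 := natDegree_X_le
    have hX2 : (X : ℝ[X]).coeff 1 ≠ 0 := by simp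
    have hQ : Q.det ≠ 0 :=
      aux_det_ne_zero v hvinj _ (fun j => (cheb_deg_coeff X hX1 hX2 (j : ℕ)).1)
        (fun j => (cheb_deg_coeff X hX1 hX2 (j : ℕ)).2)
    have hA : (Matrix.of fun i j : Fin n =>
        Real.cos (Real.pi * ((n : ℝ) - 1 - ((j : ℕ) : ℝ)) * x i)) =
        Q.submatrix id Fin.revPerm := by
      ext i j
      have hj : (j : ℕ) + 1 ≤ n := j.isLt
      simp only [Matrix.of_apply, Matrix.submatrix_apply, id_eq, Fin.revPerm_apply, hQdef]
      rw [cheb_X_eval]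
      congr 1
      rw [Fin.val_rev]
      push_cast [Nat.cast_sub hj]
      ring
    rw [cosMinus_eq_det, hA, Matrix.det_permute' Fin.revPerm Q]
    exact mul_ne_zero (hsign_ne _) hQ
  · -- case ρ₂
    set c : Fin n → ℝ := fun i => Real.cos (Real.pi * x i / 2) with hc
    have hcpos : ∀ i, 0 < c i := by
      intro i
      apply Real.cos_pos_of_mem_Ioo
      constructor
      · nlinarith [hxpos i]
      · nlinarith [hxlt i, hxpos i]
    set b : ℝ[X] := 2 * X - 1 with hb
    have hb1 : b.natDegree ≤ 1 := by
      refine le_trans (natDegree_sub_le _ _) (max_le ?_ ?_)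
      · rw [show (2 * X : ℝ[X]) = Polynomial.C 2 * X from by rw [map_ofNat],
          natDegree_C_mul (two_ne_zero), natDegree_X]
      · simp
    have hb2 : b.coeff 1 ≠ 0 := by
      rw [hb, coeff_sub, show (2 * X : ℝ[X]) = Polynomial.C 2 * X from by rw [map_ofNat],
        coeff_C_mul, coeff_X_one, coeff_one]
      norm_num
    set Q : Matrix (Fin n) (Fin n) ℝ :=
      Matrix.of fun i j => (cheb b ((j : Fin n) : ℕ)).eval (v i) with hQdef
    have hQ : Q.det ≠ 0 :=
      aux_det_ne_zero v hvinj _ (fun j => (cheb_deg_coeff b hb1 hb2 (j : ℕ)).1)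
        (fun j => (cheb_deg_coeff b hb1 hb2 (j : ℕ)).2)
    have hA : (Matrix.of fun i j : Fin n =>
        Real.cos (Real.pi * ((n : ℝ) - ((j : ℕ) : ℝ) - 1 / 2) * x i)) =
        Matrix.of fun i j => c i * (Q.submatrix id Fin.revPerm) i j := by
      ext i j
      have hj : (j : ℕ) + 1 ≤ n := j.isLt
      simp only [Matrix.of_apply, Matrix.submatrix_apply, id_eq, Fin.revPerm_apply, hQdef]
      have hkey := cheb_V_eval (Real.pi * x i / 2) ((Fin.rev j : Fin n) : ℕ)
      rw [show 2 * (Real.pi * x i / 2) = Real.pi * x i from by ring] at hkey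
      refine Eq.trans ?_ hkey.symm
      congr 1
      rw [Fin.val_rev]
      push_cast [Nat.cast_sub hj]
      ring
    rw [cosMinus_eq_det, hA, Matrix.det_mul_column, Matrix.det_permute' Fin.revPerm Q]
    exact mul_ne_zero (Finset.prod_ne_zero_iff.mpr fun i _ => ne_of_gt (hcpos i))
      (mul_ne_zero (hsign_ne _) hQ)
  · -- cosPlus
    have hP : 0 < ∏ i : Fin n, Real.cos (Real.pi * (1 / 2) * x i) := by
      apply Finset.prod_pos
      intro i _
      apply Real.cos_pos_of_mem_Ioo
      constructor
      · nlinarith [hxpos i]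
      · nlinarith [hxlt i, hxpos i]
    have : cosPlus n (fun _ => (1 : ℝ) / 2) x =
        (Fintype.card (Equiv.Perm (Fin n))) •
          ∏ i : Fin n, Real.cos (Real.pi * (1 / 2) * x i) := by
      rw [cosPlus, Finset.sum_const, Finset.card_univ]
    rw [this]
    exact ne_of_gt (nsmul_pos hP Fintype.card_ne_zero)
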